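/- Let p ≥ 1 be an integer and let G be a finite simple graph on vertices v_1, …, v_n whose girth is at least max(8p−3, 4p+2). Let G' be the graph obtained from G as follows: for each i, add a new pendant vertex v_{i,1} adjacent to v_i; and for every pair {i,j} such that the distance between v_i and v_j in G is greater than 2p−1 (including the case where they lie in different components), add 2p−1 new vertices forming a path v_{i,1}, v_{i,2,j}, …, v_{i,p+1,j}, v_{j,p,i}, …, v_{j,2,i}, v_{j,1} of length 2p between v_{i,1} and v_{j,1} (so that v_i v_{i,1} v_{i,2,j} ⋯ v_{i,p+1,j} v_{j,p,i} ⋯ v_{j,2,i} v_{j,1} v_j is a path of length 2p+2), with no other edges. Then: (i) every two vertices of G' are joined by a path of length at most 4p (G' is connected with diameter at most 4p); (ii) the girth of G' is at least 4p+2; and (iii) G' is 3-colourable if and only if G is 3-colourable. -/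

import Mathlib

/-- Pairs `(i,j)` with `i < j` such that the distance between `v_i` and `v_j` in
`G` is greater than `2p-1` (every walk from `v_i` to `v_j` has length `> 2p-1`;
in particular this includes the case where they lie in different components). -/
def farPairs (p n : ℕ) (G : SimpleGraph (Fin n)) : Type :=
  {q : Fin n × Fin n // q.1 < q.2 ∧ ∀ w : G.Walk q.1 q.2, 2 * p - 1 < w.length}

/-- The vertices of `G'`: the original vertices `v_i` (`Sum.inl i`), the pendant
vertices `v_{i,1}` (`Sum.inr (Sum.inl i)`), and for each far pair the `2p-1` new
internal path vertices, indexed by their position `0, …, 2p-2` along the path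
from `v_{i,1}` to `v_{j,1}`. -/
def pathVtx (p n : ℕ) (G : SimpleGraph (Fin n)) : Type :=
  Fin n ⊕ (Fin n ⊕ (farPairs p n G × Fin (2 * p - 1)))

/-- The base relation for `G'`: original edges of `G`; each pendant `v_{i,1}`
adjacent to `v_i`; for each far pair `{i,j}`, `v_{i,1}` adjacent to the first
internal path vertex, `v_{j,1}` adjacent to the last one, and consecutive
internal path vertices adjacent; no other edges. -/
def pathRel (p n : ℕ) (G : SimpleGraph (Fin n)) :
    pathVtx p n G → pathVtx p n G → Prop
  | Sum.inl i, Sum.inl j => G.Adj i j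
  | Sum.inl i, Sum.inr (Sum.inl j) => i = j
  | Sum.inr (Sum.inl i), Sum.inr (Sum.inr (q, t)) =>
      (i = q.val.1 ∧ t.val = 0) ∨ (i = q.val.2 ∧ t.val = 2 * p - 2)
  | Sum.inr (Sum.inr (q, t)), Sum.inr (Sum.inr (q', t')) =>
      q = q' ∧ t'.val = t.val + 1
  | _, _ => False

/-- The graph `G'` obtained from `G` by the construction. -/
def Gprime (p n : ℕ) (G : SimpleGraph (Fin n)) : SimpleGraph (pathVtx p n G) :=
  SimpleGraph.fromRel (pathRel p n G)

open SimpleGraph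

section Infra
variable {p n : ℕ} {G : SimpleGraph (Fin n)}

/-- original vertex -/
abbrev vO (i : Fin n) : pathVtx p n G := Sum.inl i
/-- pendant vertex -/
abbrev vP (i : Fin n) : pathVtx p n G := Sum.inr (Sum.inl i)
/-- internal gadget vertex -/
abbrev vI (q : farPairs p n G) (t : Fin (2 * p - 1)) : pathVtx p n G := Sum.inr (Sum.inr (q, t))

lemma Gprime_adj {x y : pathVtx p n G} :
    (Gprime p n G).Adj x y ↔ x ≠ y ∧ (pathRel p n G x y ∨ pathRel p n G y x) :=
  Iff.rfl

@[simp] lemma adj_OO {i j : Fin n} :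
    (Gprime p n G).Adj (vO i) (vO j) ↔ G.Adj i j := by
  rw [Gprime_adj]
  constructor
  · rintro ⟨hne, h | h⟩
    · exact h
    · exact h.symm
  · intro h
    refine ⟨?_, Or.inl h⟩
    intro he
    exact h.ne ((Sum.inl.injEq _ _).mp he)

@[simp] lemma adj_OP {i j : Fin n} :
    (Gprime p n G).Adj (vO i) (vP j) ↔ i = j := by
  rw [Gprime_adj]
  constructor
  · rintro ⟨hne, h | h⟩
    · exact h
    · exact h.elim
  · intro h
    exact ⟨by simp, Or.inl h⟩

@[simp] lemma adj_PO {i j : Fin n} :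
    (Gprime p n G).Adj (vP i) (vO j) ↔ j = i :=
  ⟨fun h => adj_OP.mp h.symm, fun h => (adj_OP.mpr h).symm⟩

@[simp] lemma adj_PI {i : Fin n} {q : farPairs p n G} {t : Fin (2 * p - 1)} :
    (Gprime p n G).Adj (vP i) (vI q t) ↔
      ((i = q.val.1 ∧ t.val = 0) ∨ (i = q.val.2 ∧ t.val = 2 * p - 2)) := by
  rw [Gprime_adj]
  constructor
  · rintro ⟨hne, h | h⟩
    · exact h
    · exact h.elim
  · intro h
    exact ⟨by rintro ⟨⟩, Or.inl h⟩

@[simp] lemma adj_IP {i : Fin n} {q : farPairs p n G} {t : Fin (2 * p - 1)} :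
    (Gprime p n G).Adj (vI q t) (vP i) ↔
      ((i = q.val.1 ∧ t.val = 0) ∨ (i = q.val.2 ∧ t.val = 2 * p - 2)) :=
  ⟨fun h => adj_PI.mp h.symm, fun h => (adj_PI.mpr h).symm⟩

@[simp] lemma adj_II {q r : farPairs p n G} {t s : Fin (2 * p - 1)} :
    (Gprime p n G).Adj (vI q t) (vI r s) ↔
      (q = r ∧ (s.val = t.val + 1 ∨ t.val = s.val + 1)) := by
  rw [Gprime_adj]
  constructor
  · rintro ⟨hne, h | h⟩
    · exact ⟨h.1, Or.inl h.2⟩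
    · exact ⟨h.1.symm, Or.inr h.2⟩
  · rintro ⟨rfl, h | h⟩
    · refine ⟨?_, Or.inl ⟨rfl, h⟩⟩
      intro hts
      have : t = s := by
        have := (Sum.inr.injEq _ _).mp hts
        have := (Sum.inr.injEq _ _).mp this
        exact (Prod.mk.injEq _ _ _ _).mp this |>.2
      rw [this] at h; omega
    · refine ⟨?_, Or.inr ⟨rfl, h⟩⟩
      intro hts
      have : t = s := by
        have := (Sum.inr.injEq _ _).mp hts
        have := (Sum.inr.injEq _ _).mp this
        exact (Prod.mk.injEq _ _ _ _).mp this |>.2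
      rw [this] at h; omega

@[simp] lemma adj_OI {i : Fin n} {q : farPairs p n G} {t : Fin (2 * p - 1)} :
    ¬ (Gprime p n G).Adj (vO i) (vI q t) := by
  rw [Gprime_adj]
  rintro ⟨hne, h | h⟩ <;> exact h

@[simp] lemma adj_IO {i : Fin n} {q : farPairs p n G} {t : Fin (2 * p - 1)} :
    ¬ (Gprime p n G).Adj (vI q t) (vO i) := fun h => adj_OI h.symm

@[simp] lemma adj_PP {i j : Fin n} :
    ¬ (Gprime p n G).Adj (vP i) (vP j) := by
  rw [Gprime_adj]
  rintro ⟨hne, h | h⟩ <;> exact h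

end Infra

section Coloring
variable {p n : ℕ} {G : SimpleGraph (Fin n)}

/-- a colour different from both `x` and `y` -/
def other3 (x y : Fin 3) : Fin 3 := if x + 1 ≠ y then x + 1 else x + 2

lemma other3_ne_left : ∀ x y : Fin 3, other3 x y ≠ x := by decide
lemma other3_ne_right : ∀ x y : Fin 3, other3 x y ≠ y := by decide
lemma fin3_succ_ne : ∀ x : Fin 3, x + 1 ≠ x := by decide
lemma fin3_one_ne_two : ∀ x : Fin 3, x + 1 ≠ x + 2 := by decide

/-- The colouring of `G'` induced by a 3-colouring of `G`. -/
def extColor (hp : 1 ≤ p) (C : G.Coloring (Fin 3)) : pathVtx p n G → Fin 3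
  | Sum.inl i => C i
  | Sum.inr (Sum.inl i) => C i + 1
  | Sum.inr (Sum.inr (q, t)) =>
      if t.val = 2 * p - 2 then
        other3 (if 2 * p - 2 = 0 then C q.val.1 + 1 else C q.val.1 + 1 + 2) (C q.val.2 + 1)
      else if t.val % 2 = 0 then C q.val.1 + 1 + 1 else C q.val.1 + 1 + 2

lemma extColor_valid (hp : 1 ≤ p) (C : G.Coloring (Fin 3)) {x y : pathVtx p n G}
    (hxy : (Gprime p n G).Adj x y) : extColor hp C x ≠ extColor hp C y := by
  obtain (i | i | ⟨q, t⟩) := x <;> obtain (j | j | ⟨r, s⟩) := y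
  · exact C.valid (adj_OO.mp hxy)
  · obtain rfl := adj_OP.mp hxy
    exact (fin3_succ_ne _).symm
  · exact absurd hxy adj_OI
  · obtain rfl := adj_PO.mp hxy
    exact fin3_succ_ne _
  · exact absurd hxy adj_PP
  · -- pendant–internal
    rcases adj_PI.mp hxy with ⟨rfl, ht⟩ | ⟨rfl, ht⟩
    · -- i = q.1, t = 0
      show _ ≠ extColor hp C (vI r s)
      by_cases h0 : (2:ℕ) * p - 2 = 0
      · simp only [extColor, ht, h0, if_pos, if_true]
        exact (other3_ne_left _ _).symm
      · simp only [extColor, ht]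
        rw [if_neg (show ¬((0:ℕ) = 2*p-2) by omega)]
        simp only [if_true]
        exact (fin3_succ_ne _).symm
    · -- i = q.2, t = 2p-2
      show _ ≠ extColor hp C (vI r s)
      simp only [extColor, ht, if_pos rfl]
      exact (other3_ne_right _ _).symm
  · exact absurd hxy adj_IO
  · rcases adj_IP.mp hxy with ⟨rfl, ht⟩ | ⟨rfl, ht⟩
    · show extColor hp C (vI q t) ≠ _
      by_cases h0 : (2:ℕ) * p - 2 = 0
      · simp only [extColor, ht, h0, if_pos, if_true]
        exact other3_ne_left _ _
      · simp only [extColor, ht]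
        rw [if_neg (show ¬((0:ℕ) = 2*p-2) by omega)]
        simp only [if_true]
        exact fin3_succ_ne _
    · show extColor hp C (vI q t) ≠ _
      simp only [extColor, ht, if_pos rfl]
      exact other3_ne_right _ _
  · -- internal–internal
    obtain ⟨rfl, hts | hts⟩ := adj_II.mp hxy
    · -- s = t + 1
      have htlt : t.val < 2 * p - 2 := by have := s.isLt; omega
      have h2p : ¬ ((2:ℕ) * p - 2 = 0) := by omega
      show extColor hp C (vI q t) ≠ extColor hp C (vI q s)
      simp only [extColor, if_neg (by omega : ¬ t.val = 2*p-2)]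
      by_cases hs2 : s.val = 2 * p - 2
      · -- t = 2p-3, odd
        have ht3 : t.val % 2 = 1 := by omega
        rw [if_neg (by omega), if_pos hs2, if_neg h2p]
        exact (other3_ne_left _ _).symm
      · rcases Nat.even_or_odd t.val with ⟨k, hk⟩ | ⟨k, hk⟩
        · rw [if_pos (show t.val % 2 = 0 by omega), if_neg hs2,
            if_neg (show ¬(s.val % 2 = 0) by omega)]
          exact fin3_one_ne_two _
        · rw [if_neg (show ¬(t.val % 2 = 0) by omega), if_neg hs2,
            if_pos (show s.val % 2 = 0 by omega)]
          exact (fin3_one_ne_two _).symm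
    · -- t = s + 1 : symmetric
      have htlt : s.val < 2 * p - 2 := by have := t.isLt; omega
      show extColor hp C (vI q t) ≠ extColor hp C (vI q s)
      simp only [extColor, if_neg (by omega : ¬ s.val = 2*p-2)]
      by_cases ht2 : t.val = 2 * p - 2
      · have hs3 : s.val % 2 = 1 := by omega
        rw [if_pos ht2, if_neg (by omega : ¬ ((2:ℕ) * p - 2 = 0)), if_neg (by omega)]
        exact other3_ne_left _ _
      · rcases Nat.even_or_odd s.val with ⟨k, hk⟩ | ⟨k, hk⟩
        · rw [if_neg ht2, if_neg (show ¬(t.val % 2 = 0) by omega),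
            if_pos (show s.val % 2 = 0 by omega)]
          exact (fin3_one_ne_two _).symm
        · rw [if_neg ht2, if_pos (show t.val % 2 = 0 by omega),
            if_neg (show ¬(s.val % 2 = 0) by omega)]
          exact fin3_one_ne_two _

lemma part3 (hp : 1 ≤ p) : (Gprime p n G).Colorable 3 ↔ G.Colorable 3 := by
  constructor
  · rintro ⟨C⟩
    exact ⟨SimpleGraph.Coloring.mk (fun i => C (vO i))
      (fun hij => C.valid (adj_OO.mpr hij))⟩
  · rintro ⟨C⟩
    exact ⟨SimpleGraph.Coloring.mk (extColor hp C) (fun h => extColor_valid hp C h)⟩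

end Coloring

section GeneralHelpers
open SimpleGraph
variable {V : Type*} {Γ : SimpleGraph V}

lemma append_isPath {u v w : V} {P : Γ.Walk u v} {Q : Γ.Walk v w}
    (hP : P.IsPath) (hQ : Q.IsPath)
    (hdisj : ∀ z ∈ P.support, z ∈ Q.support → z = v) : (P.append Q).IsPath := by
  rw [Walk.isPath_def, Walk.support_append]
  have hndP : P.support.Nodup := (Walk.isPath_def _).mp hP
  have hndQ : Q.support.Nodup := (Walk.isPath_def _).mp hQ
  have hQcons : Q.support = v :: Q.support.tail := Q.support_eq_cons
  have hndQt : Q.support.tail.Nodup ∧ v ∉ Q.support.tail := by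
    rw [hQcons] at hndQ
    exact ⟨(List.nodup_cons.mp hndQ).2, (List.nodup_cons.mp hndQ).1⟩
  refine List.Nodup.append hndP hndQt.1 ?_
  intro z hz1 hz2
  have hz3 : z ∈ Q.support := List.mem_of_mem_tail hz2
  obtain rfl := hdisj z hz1 hz3
  exact hndQt.2 hz2

lemma exists_first_in_set {u v : V} (W : Γ.Walk u v) (S : Set V) (hv : v ∈ S) :
    ∃ (x : V) (W1 : Γ.Walk u x) (W2 : Γ.Walk x v), x ∈ S ∧ W1.append W2 = W ∧
      (∀ z ∈ W1.support, z ∈ S → z = x) := by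
  classical
  induction W with
  | @nil a =>
    refine ⟨a, Walk.nil, Walk.nil, hv, rfl, ?_⟩
    intro z hz _
    simpa using hz
  | @cons a b c h W' ih =>
    by_cases ha : a ∈ S
    · refine ⟨a, Walk.nil, Walk.cons h W', ha, rfl, ?_⟩
      intro z hz _
      simpa using hz
    · obtain ⟨x, W1, W2, hx, happ, hfirst⟩ := ih hv
      refine ⟨x, Walk.cons h W1, W2, hx, by rw [Walk.cons_append, happ], ?_⟩
      intro z hz hzS
      rw [Walk.support_cons] at hz
      rcases List.mem_cons.mp hz with rfl | hz'
      · exact absurd hzS ha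
      · exact hfirst z hz' hzS

lemma path_eq_of_acyclic (hA : Γ.IsAcyclic) {u v : V} {P Q : Γ.Walk u v}
    (hP : P.IsPath) (hQ : Q.IsPath) : P = Q := by
  have := hA.path_unique ⟨P, hP⟩ ⟨Q, hQ⟩
  exact congrArg Subtype.val this

lemma acyclic_of_short_cycles {K H : SimpleGraph V} (hHK : H ≤ K) (L : List (Sym2 V))
    (hsub : ∀ e ∈ H.edgeSet, e ∈ L)
    (hbig : ∀ (a : V) (c : K.Walk a a), c.IsCycle → L.length < c.length) :
    H.IsAcyclic := by
  intro a c hc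
  have hlen := hbig a (c.mapLe hHK) (hc.mapLe hHK)
  have hmaplen : (c.mapLe hHK).length = c.length := Walk.length_map _ _
  have hnodup : c.edges.Nodup := hc.isTrail.edges_nodup
  have hsub' : c.edges ⊆ L := fun e he => hsub e (c.edges_subset_edgeSet he)
  have : c.edges.length ≤ L.length := (hnodup.subperm hsub').length_le
  rw [c.length_edges] at this
  omega

lemma exists_concat_of_not_nil {x v : V} (q : Γ.Walk x v) (h : ¬ q.Nil) :
    ∃ (y : V) (r : Γ.Walk x y) (ha : Γ.Adj y v), q = r.concat ha := by
  cases q with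
  | nil => simp at h
  | cons h' q' => exact Walk.exists_cons_eq_concat h' q'

/-- every vertex on a cycle has two distinct incident edges on the cycle -/
lemma cycle_two_incident {a v : V} {c : Γ.Walk a a} (hc : c.IsCycle)
    (hv : v ∈ c.support) :
    ∃ x y : V, x ≠ y ∧ Γ.Adj v x ∧ Γ.Adj v y ∧
      s(v, x) ∈ c.edges ∧ s(v, y) ∈ c.edges := by
  classical
  have hc' : (c.rotate v hv).IsCycle := hc.rotate hv
  set c' := c.rotate v hv with hc'def
  have hedges : ∀ e, e ∈ c'.edges ↔ e ∈ c.edges := fun e => (c.rotate_edges v hv).mem_iff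
  have h3 : 3 ≤ c'.length := hc'.three_le_length
  have hnn : ¬ c'.Nil := by
    intro hnil
    have := Walk.nil_iff_length_eq.mp hnil
    omega
  obtain ⟨x, hadj, q, hq⟩ := Walk.not_nil_iff.mp hnn
  have hqlen : q.length + 1 = c'.length := by rw [hq]; simp
  have hqnn : ¬ q.Nil := by
    intro hnil
    have := Walk.nil_iff_length_eq.mp hnil
    omega
  obtain ⟨y, r, hay, hq'⟩ := exists_concat_of_not_nil q hqnn
  have hyedge : s(v, y) ∈ q.edges := by
    rw [hq', Walk.concat_eq_append, Walk.edges_append]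
    simp [Sym2.eq_swap]
  have hxedge : s(v, x) ∈ c'.edges := by rw [hq]; simp
  have hnodup : c'.edges.Nodup := hc'.isTrail.edges_nodup
  have hxq : s(v, x) ∉ q.edges := by
    rw [hq] at hnodup
    simp only [Walk.edges_cons, List.nodup_cons] at hnodup
    exact hnodup.1
  have hxy : x ≠ y := by
    rintro rfl
    exact hxq hyedge
  refine ⟨x, y, hxy, hadj, hay.symm, (hedges _).mp hxedge, (hedges _).mp ?_⟩
  rw [hq, Walk.edges_cons]
  exact List.mem_cons_of_mem _ hyedge

end GeneralHelpers

section TreeContra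
open SimpleGraph
variable {V : Type*} {Γ : SimpleGraph V}

lemma treeContra {p : ℕ} (hp : 1 ≤ p)
    (hgirth : ∀ (a : V) (c : Γ.Walk a a), c.IsCycle → 8 * p - 3 ≤ c.length)
    {i j k l : V}
    (A0 : Γ.Walk i k) (B0 : Γ.Walk i l) (C0 : Γ.Walk j k) (D0 : Γ.Walk j l)
    (hA0 : A0.length ≤ 2 * p - 1) (hB0 : B0.length ≤ 2 * p - 1)
    (hC0 : C0.length ≤ 2 * p - 1) (hD0 : D0.length ≤ 2 * p - 1)
    (hij : ∀ w : Γ.Walk i j, 2 * p ≤ w.length)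
    (hkl : ∀ w : Γ.Walk k l, 2 * p ≤ w.length) : False := by
  classical
  set A := A0.bypass with hA_def
  set B := B0.bypass with hB_def
  set C := C0.bypass with hC_def
  set D := D0.bypass with hD_def
  have hA : A.length ≤ 2 * p - 1 := le_trans A0.length_bypass_le hA0
  have hB : B.length ≤ 2 * p - 1 := le_trans B0.length_bypass_le hB0
  have hC : C.length ≤ 2 * p - 1 := le_trans C0.length_bypass_le hC0
  have hD : D.length ≤ 2 * p - 1 := le_trans D0.length_bypass_le hD0
  have hApath : A.IsPath := A0.bypass_isPath
  have hBpath : B.IsPath := B0.bypass_isPath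
  have hCpath : C.IsPath := C0.bypass_isPath
  have hDpath : D.IsPath := D0.bypass_isPath
  -- the union subgraph
  set H : SimpleGraph V :=
    (A.toSubgraph ⊔ B.toSubgraph ⊔ C.toSubgraph ⊔ D.toSubgraph).spanningCoe with hH_def
  have hHΓ : H ≤ Γ := Subgraph.spanningCoe_le _
  set L : List (Sym2 V) := A.edges ++ B.edges ++ C.edges ++ D.edges with hL_def
  have hLlen : L.length ≤ 8 * p - 4 := by
    have := A.length_edges; have := B.length_edges; have := C.length_edges
    have := D.length_edges
    simp only [hL_def, List.length_append]
    omega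
  have hsub : ∀ e ∈ H.edgeSet, e ∈ L := by
    intro e he
    induction e with
    | _ a b =>
      have : (A.toSubgraph ⊔ B.toSubgraph ⊔ C.toSubgraph ⊔ D.toSubgraph).Adj a b := he
      simp only [Subgraph.sup_adj] at this
      simp only [hL_def, List.mem_append]
      rcases this with ((h | h) | h) | h
      · exact Or.inl (Or.inl (Or.inl (A.mem_edges_toSubgraph.mp (Subgraph.mem_edgeSet.mpr h))))
      · exact Or.inl (Or.inl (Or.inr (B.mem_edges_toSubgraph.mp (Subgraph.mem_edgeSet.mpr h))))
      · exact Or.inl (Or.inr (C.mem_edges_toSubgraph.mp (Subgraph.mem_edgeSet.mpr h)))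
      · exact Or.inr (D.mem_edges_toSubgraph.mp (Subgraph.mem_edgeSet.mpr h))
  have hacyc : H.IsAcyclic := by
    refine acyclic_of_short_cycles hHΓ L hsub ?_
    intro a c hc
    have := hgirth a c hc
    omega
  -- membership of the four paths' edges in H
  have hedgeHiff : ∀ e : Sym2 V, e ∈ H.edgeSet ↔
      e ∈ (A.toSubgraph ⊔ B.toSubgraph ⊔ C.toSubgraph ⊔ D.toSubgraph).edgeSet := by
    intro e
    induction e with
    | _ a b => exact Iff.rfl
  have hAe : ∀ e ∈ A.edges, e ∈ H.edgeSet := by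
    intro e he
    rw [hedgeHiff]
    exact Subgraph.edgeSet_mono ((le_sup_left.trans le_sup_left).trans le_sup_left :
      A.toSubgraph ≤ _) (A.mem_edges_toSubgraph.mpr he)
  have hBe : ∀ e ∈ B.edges, e ∈ H.edgeSet := by
    intro e he
    rw [hedgeHiff]
    exact Subgraph.edgeSet_mono ((le_sup_right.trans le_sup_left).trans le_sup_left :
      B.toSubgraph ≤ _) (B.mem_edges_toSubgraph.mpr he)
  have hCe : ∀ e ∈ C.edges, e ∈ H.edgeSet := by
    intro e he
    rw [hedgeHiff]
    exact Subgraph.edgeSet_mono (le_sup_right.trans le_sup_left :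
      C.toSubgraph ≤ _) (C.mem_edges_toSubgraph.mpr he)
  have hDe : ∀ e ∈ D.edges, e ∈ H.edgeSet := by
    intro e he
    rw [hedgeHiff]
    exact Subgraph.edgeSet_mono (le_sup_right : D.toSubgraph ≤ _)
      (D.mem_edges_toSubgraph.mpr he)
  set A' := A.transfer H hAe with hA'_def
  set B' := B.transfer H hBe with hB'_def
  set C' := C.transfer H hCe with hC'_def
  set D' := D.transfer H hDe with hD'_def
  have hA'path : A'.IsPath := Walk.IsPath.transfer _ hApath
  have hB'path : B'.IsPath := Walk.IsPath.transfer _ hBpath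
  have hC'path : C'.IsPath := Walk.IsPath.transfer _ hCpath
  have hD'path : D'.IsPath := Walk.IsPath.transfer _ hDpath
  have hA'len : A'.length = A.length := Walk.length_transfer _ _
  have hB'len : B'.length = B.length := Walk.length_transfer _ _
  have hC'len : C'.length = C.length := Walk.length_transfer _ _
  have hD'len : D'.length = D.length := Walk.length_transfer _ _
  -- lower bounds for walks in H
  have hijH : ∀ w : H.Walk i j, 2 * p ≤ w.length := by
    intro w
    have := hij (w.mapLe hHΓ)
    rwa [Walk.length_map] at this
  have hklH : ∀ w : H.Walk k l, 2 * p ≤ w.length := by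
    intro w
    have := hkl (w.mapLe hHΓ)
    rwa [Walk.length_map] at this
  -- the path P from i to j in H
  set P := (A'.append C'.reverse).bypass with hP_def
  have hPpath : P.IsPath := Walk.bypass_isPath _
  have hPlb : 2 * p ≤ P.length := hijH P
  have hiP : i ∈ P.support := P.start_mem_support
  -- first vertex of A'.reverse on P : the median m
  obtain ⟨m, W1, W2, hmS, happ1, hfirst1⟩ :=
    exists_first_in_set A'.reverse {z | z ∈ P.support} hiP
  obtain ⟨m', W1', W2', hmS', happ1', hfirst1'⟩ :=
    exists_first_in_set B'.reverse {z | z ∈ P.support} hiP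
  have hmP : m ∈ P.support := hmS
  have hmP' : m' ∈ P.support := hmS'
  have hW1path : W1.IsPath := by
    rw [Walk.isPath_def]
    have : (W1.append W2).support.Nodup := by
      rw [happ1]; exact Walk.isPath_def _ |>.mp hA'path.reverse
    rw [Walk.support_append] at this
    exact this.of_append_left
  have hW1'path : W1'.IsPath := by
    rw [Walk.isPath_def]
    have : (W1'.append W2').support.Nodup := by
      rw [happ1']; exact Walk.isPath_def _ |>.mp hB'path.reverse
    rw [Walk.support_append] at this
    exact this.of_append_left
  set T1 := P.takeUntil m hmP with hT1_def
  set D1 := P.dropUntil m hmP with hD1_def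
  set T1' := P.takeUntil m' hmP' with hT1'_def
  set D1' := P.dropUntil m' hmP' with hD1'_def
  have hsplit : T1.append D1 = P := P.take_spec hmP
  have hsplit' : T1'.append D1' = P := P.take_spec hmP'
  have hlensplit : T1.length + D1.length = P.length := by
    have := congrArg Walk.length hsplit
    rwa [Walk.length_append] at this
  have hlensplit' : T1'.length + D1'.length = P.length := by
    have := congrArg Walk.length hsplit'
    rwa [Walk.length_append] at this
  have hT1path : T1.IsPath := hPpath.takeUntil hmP
  have hD1path : D1.IsPath := hPpath.dropUntil hmP
  have hT1'path : T1'.IsPath := hPpath.takeUntil hmP'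
  have hD1'path : D1'.IsPath := hPpath.dropUntil hmP'
  -- Q1 : k → i equals A'.reverse
  have hQ1 : W1.length + T1.length = A.length := by
    have hQ1path : (W1.append T1.reverse).IsPath := by
      refine append_isPath hW1path hT1path.reverse ?_
      intro z hz1 hz2
      refine hfirst1 z hz1 ?_
      rw [Walk.support_reverse] at hz2
      exact Set.mem_setOf.mpr (P.support_takeUntil_subset hmP (List.mem_reverse.mp hz2))
    have := path_eq_of_acyclic hacyc hQ1path hA'path.reverse
    have hlen := congrArg Walk.length this
    rw [Walk.length_append, Walk.length_reverse, Walk.length_reverse, hA'len] at hlen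
    omega
  have hQ2 : W1.length + D1.length = C.length := by
    have hQ2path : (W1.append D1).IsPath := by
      refine append_isPath hW1path hD1path ?_
      intro z hz1 hz2
      exact hfirst1 z hz1 (Set.mem_setOf.mpr (P.support_dropUntil_subset hmP hz2))
    have hend : (W1.append D1).IsPath → True := fun _ => trivial
    have := path_eq_of_acyclic hacyc hQ2path hC'path.reverse
    have hlen := congrArg Walk.length this
    rw [Walk.length_append, Walk.length_reverse, hC'len] at hlen
    omega
  have hQ1' : W1'.length + T1'.length = B.length := by
    have hQ1'path : (W1'.append T1'.reverse).IsPath := by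
      refine append_isPath hW1'path hT1'path.reverse ?_
      intro z hz1 hz2
      refine hfirst1' z hz1 ?_
      rw [Walk.support_reverse] at hz2
      exact Set.mem_setOf.mpr (P.support_takeUntil_subset hmP' (List.mem_reverse.mp hz2))
    have := path_eq_of_acyclic hacyc hQ1'path hB'path.reverse
    have hlen := congrArg Walk.length this
    rw [Walk.length_append, Walk.length_reverse, Walk.length_reverse, hB'len] at hlen
    omega
  have hQ2' : W1'.length + D1'.length = D.length := by
    have hQ2'path : (W1'.append D1').IsPath := by
      refine append_isPath hW1'path hD1'path ?_
      intro z hz1 hz2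
      exact hfirst1' z hz1 (Set.mem_setOf.mpr (P.support_dropUntil_subset hmP' hz2))
    have := path_eq_of_acyclic hacyc hQ2'path hD'path.reverse
    have hlen := congrArg Walk.length this
    rw [Walk.length_append, Walk.length_reverse, hD'len] at hlen
    omega
  -- m' is on T1 or on D1
  have hm'cases : m' ∈ T1.support ∨ m' ∈ D1.support := by
    have : m' ∈ (T1.append D1).support := by rw [hsplit]; exact hmP'
    exact (Walk.mem_support_append_iff _ _).mp this
  rcases hm'cases with hm'T | hm'D
  · -- m' before m : use A and D
    set S2 := T1.dropUntil m' hm'T with hS2_def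
    set T2 := T1.takeUntil m' hm'T with hT2_def
    have hT2eq : T2 = T1' := path_eq_of_acyclic hacyc (hT1path.takeUntil hm'T) hT1'path
    have hlenT : T2.length + S2.length = T1.length := by
      have := congrArg Walk.length (T1.take_spec hm'T)
      rwa [Walk.length_append] at this
    -- walk from k to l : W1 ++ S2.reverse ++ W1'.reverse
    have hkl' := hklH ((W1.append S2.reverse).append W1'.reverse)
    rw [Walk.length_append, Walk.length_append, Walk.length_reverse,
      Walk.length_reverse] at hkl'
    have hT2len : T2.length = T1'.length := by rw [hT2eq]
    omega
  · -- m before m' : use B and C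
    set S2 := D1.takeUntil m' hm'D with hS2_def
    set D2 := D1.dropUntil m' hm'D with hD2_def
    have hD2eq : D2 = D1' := path_eq_of_acyclic hacyc (hD1path.dropUntil hm'D) hD1'path
    have hlenD : S2.length + D2.length = D1.length := by
      have := congrArg Walk.length (D1.take_spec hm'D)
      rwa [Walk.length_append] at this
    have hkl' := hklH ((W1.append S2).append W1'.reverse)
    rw [Walk.length_append, Walk.length_append, Walk.length_reverse] at hkl'
    have hD2len : D2.length = D1'.length := by rw [hD2eq]
    omega

end TreeContra

section Constructions
open SimpleGraph
variable {p n : ℕ} {G : SimpleGraph (Fin n)}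

/-- the embedding of `G` into `G'` -/
def homO : G →g Gprime p n G where
  toFun := vO
  map_rel' := fun h => adj_OO.mpr h

lemma homO_apply_eq (i : Fin n) : homO (p := p) (G := G) i = vO i := rfl

lemma homO_injective : Function.Injective (homO (p := p) (n := n) (G := G)) := by
  intro a b h
  have : vO (p := p) (G := G) a = vO b := h
  exact Sum.inl.injEq a b ▸ this

/-- walking right inside a gadget, from position `t` to the pendant of `q.2` -/
lemma walkRight (hp : 1 ≤ p) (q : farPairs p n G) :
    ∀ (k : ℕ) (t : Fin (2 * p - 1)), t.val + k = 2 * p - 2 →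
      ∃ w : (Gprime p n G).Walk (vI q t) (vP q.val.2), w.length = k + 1 := by
  intro k
  induction k with
  | zero =>
    intro t ht
    exact ⟨Walk.cons (adj_IP.mpr (Or.inr ⟨rfl, by omega⟩)) Walk.nil, by simp⟩
  | succ k ih =>
    intro t ht
    have hlt : t.val + 1 < 2 * p - 1 := by omega
    obtain ⟨w, hw⟩ := ih ⟨t.val + 1, hlt⟩ (by simp; omega)
    refine ⟨Walk.cons (adj_II.mpr ⟨rfl, Or.inl (by simp)⟩) w, by simp [hw]⟩

/-- walking left inside a gadget, from position `t` to the pendant of `q.1` -/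
lemma walkLeft (hp : 1 ≤ p) (q : farPairs p n G) :
    ∀ (k : ℕ) (t : Fin (2 * p - 1)), t.val = k →
      ∃ w : (Gprime p n G).Walk (vI q t) (vP q.val.1), w.length = k + 1 := by
  intro k
  induction k with
  | zero =>
    intro t ht
    exact ⟨Walk.cons (adj_IP.mpr (Or.inl ⟨rfl, ht⟩)) Walk.nil, by simp⟩
  | succ k ih =>
    intro t ht
    have hlt : k < 2 * p - 1 := by omega
    obtain ⟨w, hw⟩ := ih ⟨k, hlt⟩ rfl
    refine ⟨Walk.cons (adj_II.mpr ⟨rfl, Or.inr (by simp [ht])⟩) w, by simp [hw]⟩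

lemma walkToLeft (hp : 1 ≤ p) (q : farPairs p n G) (t : Fin (2 * p - 1)) :
    ∃ w : (Gprime p n G).Walk (vI q t) (vP q.val.1), w.length = t.val + 1 :=
  walkLeft hp q t.val t rfl

lemma walkToRight (hp : 1 ≤ p) (q : farPairs p n G) (t : Fin (2 * p - 1)) :
    ∃ w : (Gprime p n G).Walk (vI q t) (vP q.val.2), w.length = 2 * p - 1 - t.val := by
  obtain ⟨w, hw⟩ := walkRight hp q (2 * p - 2 - t.val) t (by have := t.isLt; omega)
  refine ⟨w, by rw [hw]; have := t.isLt; omega⟩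

/-- the full gadget path between the two pendants of a far pair -/
lemma gadgetW (hp : 1 ≤ p) (q : farPairs p n G) :
    ∃ w : (Gprime p n G).Walk (vP q.val.1) (vP q.val.2), w.length = 2 * p := by
  have h0 : (0 : ℕ) < 2 * p - 1 := by omega
  obtain ⟨w, hw⟩ := walkToRight hp q ⟨0, h0⟩
  refine ⟨Walk.cons (adj_PI.mpr (Or.inl ⟨rfl, rfl⟩)) w, by simp [hw]; omega⟩

/-- the stem edge -/
def stemW (i : Fin n) : (Gprime p n G).Walk (vO i) (vP i) :=
  Walk.cons (adj_OP.mpr rfl) Walk.nil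

@[simp] lemma stemW_length (i : Fin n) : (stemW (p := p) (G := G) i).length = 1 := rfl

/-- a gadget route between distinct far pendants -/
lemma farRoute (hp : 1 ≤ p) {i j : Fin n} (hne : i ≠ j)
    (hfar : ∀ w : G.Walk i j, 2 * p - 1 < w.length) :
    ∃ w : (Gprime p n G).Walk (vP i) (vP j), w.length = 2 * p := by
  rcases lt_or_gt_of_ne hne with h | h
  · obtain ⟨w, hw⟩ := gadgetW hp ⟨(i, j), h, hfar⟩
    exact ⟨w, hw⟩
  · obtain ⟨w, hw⟩ := gadgetW hp ⟨(j, i), h, fun w => by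
      have := hfar w.reverse
      rwa [Walk.length_reverse] at this⟩
    exact ⟨w.reverse, by rwa [Walk.length_reverse]⟩

/-- pendant to pendant, always within `2p+1` -/
lemma wPP (hp : 1 ≤ p) (i j : Fin n) :
    ∃ w : (Gprime p n G).Walk (vP i) (vP j), w.length ≤ 2 * p + 1 := by
  classical
  by_cases hij : i = j
  · subst hij; exact ⟨Walk.nil, by simp⟩
  by_cases hfar : ∀ w : G.Walk i j, 2 * p - 1 < w.length
  · obtain ⟨w, hw⟩ := farRoute hp hij hfar
    exact ⟨w, by omega⟩
  · push_neg at hfar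
    obtain ⟨wG, hwG⟩ := hfar
    refine ⟨((stemW i).reverse.append ((wG.map homO).copy (homO_apply_eq _) (homO_apply_eq _))).append (stemW j), ?_⟩
    simp only [Walk.length_append, Walk.length_reverse, stemW_length, Walk.length_copy, Walk.length_map]
    omega

/-- original to pendant, always within `2p+1` -/
lemma wOP (hp : 1 ≤ p) (i j : Fin n) :
    ∃ w : (Gprime p n G).Walk (vO i) (vP j), w.length ≤ 2 * p + 1 := by
  classical
  by_cases hij : i = j
  · subst hij
    refine ⟨stemW i, ?_⟩
    rw [stemW_length]
    omega
  by_cases hfar : ∀ w : G.Walk i j, 2 * p - 1 < w.length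
  · obtain ⟨w, hw⟩ := farRoute hp hij hfar
    refine ⟨(stemW i).append w, ?_⟩
    rw [Walk.length_append, stemW_length, hw]
    omega
  · push_neg at hfar
    obtain ⟨wG, hwG⟩ := hfar
    refine ⟨((wG.map homO).copy (homO_apply_eq _) (homO_apply_eq _)).append (stemW j), ?_⟩
    simp only [Walk.length_append, stemW_length, Walk.length_copy, Walk.length_map]
    omega

/-- original to original, always within `2p+2` -/
lemma wOO (hp : 1 ≤ p) (i j : Fin n) :
    ∃ w : (Gprime p n G).Walk (vO i) (vO j), w.length ≤ 2 * p + 2 := by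
  classical
  by_cases hij : i = j
  · subst hij; exact ⟨Walk.nil, by simp⟩
  by_cases hfar : ∀ w : G.Walk i j, 2 * p - 1 < w.length
  · obtain ⟨w, hw⟩ := farRoute hp hij hfar
    refine ⟨((stemW i).append w).append (stemW j).reverse, ?_⟩
    simp only [Walk.length_append, Walk.length_reverse, stemW_length, hw]
    omega
  · push_neg at hfar
    obtain ⟨wG, hwG⟩ := hfar
    exact ⟨(wG.map homO).copy (homO_apply_eq _) (homO_apply_eq _), by simp [Walk.length_map]; omega⟩

end Constructions

section Part1
open SimpleGraph
variable {p n : ℕ} {G : SimpleGraph (Fin n)}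

lemma sideShort (hp : 1 ≤ p) (q : farPairs p n G) (t : Fin (2 * p - 1)) :
    ∃ (a : Fin n) (w : (Gprime p n G).Walk (vI q t) (vP a)),
      w.length ≤ p ∧ (w.length = p → t.val + 1 = p) := by
  rcases le_or_gt (t.val + 1) p with h | h
  · obtain ⟨w, hw⟩ := walkToLeft hp q t
    exact ⟨_, w, by omega, fun hh => by omega⟩
  · obtain ⟨w, hw⟩ := walkToRight hp q t
    have := t.isLt
    exact ⟨_, w, by omega, fun hh => by omega⟩

/-- if there is no short pendant-pendant route, there is a tight `G`-walk -/
lemma tightOf (hp : 1 ≤ p) (a b : Fin n)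
    (hG : ¬ ∃ wP : (Gprime p n G).Walk (vP a) (vP b), wP.length ≤ 2 * p) :
    ∃ wG : G.Walk a b, wG.length ≤ 2 * p - 1 := by
  classical
  by_cases hab : a = b
  · subst hab
    exact absurd ⟨Walk.nil, by simp⟩ hG
  by_cases hfar : ∀ w : G.Walk a b, 2 * p - 1 < w.length
  · obtain ⟨w, hw⟩ := farRoute hp hab hfar
    exact absurd ⟨w, by omega⟩ hG
  · push_neg at hfar
    exact hfar

lemma wII (hp : 1 ≤ p)
    (hgirthG : ∀ (a : Fin n) (c : G.Walk a a), c.IsCycle → 8 * p - 3 ≤ c.length)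
    (q : farPairs p n G) (t : Fin (2 * p - 1)) (r : farPairs p n G) (s : Fin (2 * p - 1)) :
    ∃ w : (Gprime p n G).Walk (vI q t) (vI r s), w.length ≤ 4 * p := by
  classical
  obtain ⟨a, wa, hwa_le, hwa_eq⟩ := sideShort hp q t
  obtain ⟨b, wb, hwb_le, hwb_eq⟩ := sideShort hp r s
  by_cases hG : ∃ wP : (Gprime p n G).Walk (vP a) (vP b), wP.length ≤ 2 * p
  · obtain ⟨wP, hwP⟩ := hG
    refine ⟨(wa.append wP).append wb.reverse, ?_⟩
    simp only [Walk.length_append, Walk.length_reverse]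
    omega
  obtain ⟨wG, hwG⟩ := tightOf hp a b hG
  by_cases hsmall : wa.length + wb.length ≤ 2 * p - 1
  · -- tight route through a,b
    refine ⟨(wa.append (((stemW a).reverse.append ((wG.map homO).copy (homO_apply_eq _) (homO_apply_eq _))).append (stemW b))).append
      wb.reverse, ?_⟩
    simp only [Walk.length_append, Walk.length_reverse, stemW_length, Walk.length_copy, Walk.length_map]
    omega
  -- both sides cost exactly p; all four side walks have length p
  have hwa_p : wa.length = p := by omega
  have hwb_p : wb.length = p := by omega
  have ht : t.val + 1 = p := hwa_eq hwa_p
  have hs : s.val + 1 = p := hwb_eq hwb_p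
  obtain ⟨wLq, hwLq⟩ := walkToLeft hp q t
  obtain ⟨wRq, hwRq⟩ := walkToRight hp q t
  obtain ⟨wLr, hwLr⟩ := walkToLeft hp r s
  obtain ⟨wRr, hwRr⟩ := walkToRight hp r s
  have hLq : wLq.length = p := by omega
  have hRq : wRq.length = p := by have := t.isLt; omega
  have hLr : wLr.length = p := by omega
  have hRr : wRr.length = p := by have := s.isLt; omega
  by_cases h11 : ∃ wP : (Gprime p n G).Walk (vP q.val.1) (vP r.val.1), wP.length ≤ 2 * p
  · obtain ⟨wP, hwP⟩ := h11
    refine ⟨(wLq.append wP).append wLr.reverse, ?_⟩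
    simp only [Walk.length_append, Walk.length_reverse]
    omega
  by_cases h12 : ∃ wP : (Gprime p n G).Walk (vP q.val.1) (vP r.val.2), wP.length ≤ 2 * p
  · obtain ⟨wP, hwP⟩ := h12
    refine ⟨(wLq.append wP).append wRr.reverse, ?_⟩
    simp only [Walk.length_append, Walk.length_reverse]
    omega
  by_cases h21 : ∃ wP : (Gprime p n G).Walk (vP q.val.2) (vP r.val.1), wP.length ≤ 2 * p
  · obtain ⟨wP, hwP⟩ := h21
    refine ⟨(wRq.append wP).append wLr.reverse, ?_⟩
    simp only [Walk.length_append, Walk.length_reverse]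
    omega
  by_cases h22 : ∃ wP : (Gprime p n G).Walk (vP q.val.2) (vP r.val.2), wP.length ≤ 2 * p
  · obtain ⟨wP, hwP⟩ := h22
    refine ⟨(wRq.append wP).append wRr.reverse, ?_⟩
    simp only [Walk.length_append, Walk.length_reverse]
    omega
  -- all four pairs tight : contradiction with the girth of G
  exfalso
  obtain ⟨A, hA⟩ := tightOf hp _ _ h11
  obtain ⟨B, hB⟩ := tightOf hp _ _ h12
  obtain ⟨C, hC⟩ := tightOf hp _ _ h21
  obtain ⟨D, hD⟩ := tightOf hp _ _ h22
  exact treeContra hp hgirthG A B C D hA hB hC hD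
    (fun w => by have := q.prop.2 w; omega)
    (fun w => by have := r.prop.2 w; omega)

lemma part1 (hp : 1 ≤ p)
    (hgirthG : ∀ (a : Fin n) (c : G.Walk a a), c.IsCycle → 8 * p - 3 ≤ c.length) :
    ∀ x y : pathVtx p n G, ∃ w : (Gprime p n G).Walk x y, w.length ≤ 4 * p := by
  have hOI : ∀ (m : Fin n) (q : farPairs p n G) (t : Fin (2 * p - 1)),
      ∃ w : (Gprime p n G).Walk (vO m) (vI q t), w.length ≤ 4 * p := by
    intro m q t
    obtain ⟨a, wa, hwa_le, _⟩ := sideShort hp q t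
    obtain ⟨wP, hwP⟩ := wOP hp m a
    refine ⟨wP.append wa.reverse, ?_⟩
    simp only [Walk.length_append, Walk.length_reverse]
    omega
  have hPI : ∀ (m : Fin n) (q : farPairs p n G) (t : Fin (2 * p - 1)),
      ∃ w : (Gprime p n G).Walk (vP m) (vI q t), w.length ≤ 4 * p := by
    intro m q t
    obtain ⟨a, wa, hwa_le, _⟩ := sideShort hp q t
    obtain ⟨wP, hwP⟩ := wPP hp m a
    refine ⟨wP.append wa.reverse, ?_⟩
    simp only [Walk.length_append, Walk.length_reverse]
    omega
  intro x y
  obtain (i | i | ⟨q, t⟩) := x <;> obtain (j | j | ⟨r, s⟩) := y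
  · obtain ⟨w, hw⟩ := wOO hp i j
    exact ⟨w, by omega⟩
  · obtain ⟨w, hw⟩ := wOP hp i j
    exact ⟨w, by omega⟩
  · exact hOI i r s
  · obtain ⟨w, hw⟩ := wOP hp j i
    exact ⟨w.reverse, by erw [Walk.length_reverse]; omega⟩
  · obtain ⟨w, hw⟩ := wPP hp i j
    exact ⟨w, by omega⟩
  · exact hPI i r s
  · obtain ⟨w, hw⟩ := hOI j q t
    exact ⟨w.reverse, by erw [Walk.length_reverse]; omega⟩
  · obtain ⟨w, hw⟩ := hPI j q t
    exact ⟨w.reverse, by erw [Walk.length_reverse]; omega⟩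
  · exact wII hp hgirthG q t r s

end Part1


section LiftAndLB
open SimpleGraph
variable {p n : ℕ} {G : SimpleGraph (Fin n)}

/-- lifting a walk of `G'` that stays among original vertices to `G` -/
lemma liftWalkAux :
    ∀ {x y : pathVtx p n G} (W : (Gprime p n G).Walk x y) {a b : Fin n},
      x = vO a → y = vO b → (∀ z ∈ W.support, ∃ i, z = vO i) →
      ∃ wG : G.Walk a b, wG.length = W.length ∧ W.support = wG.support.map vO ∧
        W.edges = wG.edges.map (Sym2.map vO) := by
  intro x y W
  induction W with
  | @nil u =>
    intro a b hx hy hpure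
    subst hx
    obtain rfl : a = b := Sum.inl.inj hy
    exact ⟨Walk.nil, by simp, by simp, by simp⟩
  | @cons u v w h W' ih =>
    intro a b hx hy hpure
    subst hx
    obtain ⟨i, rfl⟩ : ∃ i, v = vO i := hpure v (by simp)
    have hadj : G.Adj a i := adj_OO.mp h
    obtain ⟨wG', hlen, hsupp, hedg⟩ := ih rfl hy
      (fun z hz => hpure z (by rw [Walk.support_cons]; exact List.mem_cons_of_mem _ hz))
    refine ⟨Walk.cons hadj wG', by simp [hlen], ?_, ?_⟩
    · rw [Walk.support_cons, hsupp, Walk.support_cons, List.map_cons]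
    · rw [Walk.edges_cons, hedg, Walk.edges_cons, List.map_cons]
      rfl

lemma liftCycle {x : pathVtx p n G} (c : (Gprime p n G).Walk x x) (hc : c.IsCycle)
    (hpure : ∀ z ∈ c.support, ∃ i, z = vO i) :
    ∃ (a : Fin n) (cG : G.Walk a a), cG.IsCycle ∧ cG.length = c.length := by
  obtain ⟨a, rfl⟩ := hpure x c.start_mem_support
  obtain ⟨cG, hlen, hsupp, hedg⟩ := liftWalkAux c rfl rfl hpure
  have h3 := hc.three_le_length
  refine ⟨a, cG, ?_, hlen⟩
  rw [Walk.isCycle_def] at hc ⊢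
  refine ⟨?_, ?_, ?_⟩
  · rw [Walk.isTrail_def]
    have := hc.1.edges_nodup
    rw [hedg] at this
    exact this.of_map _
  · intro hnil
    subst hnil
    simp at hlen
    omega
  · have := hc.2.2
    rw [hsupp] at this
    have htail : (cG.support.map (vO (p := p) (G := G))).tail = cG.support.tail.map vO := by
      rw [cG.support_eq_cons]
      simp
    rw [htail] at this
    exact this.of_map _

/-- decomposition at the first pendant vertex -/
lemma Dec1 :
    ∀ {x y : pathVtx p n G} (W : (Gprime p n G).Walk x y) {a b : Fin n},
      x = vO a → y = vO b →
      (∀ z ∈ W.support, ∃ i, z = vO i) ∨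
      ∃ (m : Fin n) (w0 : G.Walk a m) (U : (Gprime p n G).Walk (vP m) (vO b)),
        w0.length + 1 + U.length = W.length := by
  intro x y W
  induction W with
  | @nil u =>
    intro a b hx _
    left
    intro z hz
    rw [Walk.support_nil] at hz
    simp only [List.mem_singleton] at hz
    exact ⟨a, hz.trans hx⟩
  | @cons u v w h W' ih =>
    intro a b hx hy
    subst hx
    subst hy
    obtain (i | i | ⟨σ, τ⟩) := v
    · rcases ih rfl rfl with hpure | ⟨m, w0, U, hl⟩
      · left
        intro z hz
        replace hz : z ∈ _ :: W'.support := hz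
        rcases List.mem_cons.mp hz with rfl | hz'
        · exact ⟨a, rfl⟩
        · exact hpure z hz'
      · exact Or.inr ⟨m, Walk.cons (adj_OO.mp h) w0, U, by
          show _ + 1 + _ = W'.length + 1; rw [Walk.length_cons, ← hl]; omega⟩
    · obtain rfl : a = i := (adj_OP.mp h)
      exact Or.inr ⟨a, Walk.nil, W', by
        show 0 + 1 + _ = W'.length + 1; omega⟩
    · exact absurd h adj_OI

/-- decomposition of a walk starting at a non-original vertex, at its first
original vertex -/
lemma Dec2 :
    ∀ {x y : pathVtx p n G} (W : (Gprime p n G).Walk x y) {b : Fin n},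
      (∀ i, x ≠ vO i) → y = vO b →
      ∃ (m' : Fin n) (U1 : (Gprime p n G).Walk x (vP m'))
        (W2 : (Gprime p n G).Walk (vO m') (vO b)),
        U1.length + 1 + W2.length = W.length ∧ (∀ z ∈ U1.support, ∀ i, z ≠ vO i) := by
  intro x y W
  induction W with
  | @nil u =>
    intro b hx hy
    exact absurd hy (hx b)
  | @cons u v w h W' ih =>
    intro b hx hy
    obtain (c | c | ⟨σ, τ⟩) := v
    · subst hy
      obtain (i | i | ⟨σ, τ⟩) := u
      · exact absurd rfl (hx i)
      · obtain rfl : c = i := adj_PO.mp h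
        refine ⟨c, Walk.nil, W', by
          show 0 + 1 + _ = W'.length + 1; omega, ?_⟩
        intro z hz
        replace hz : z ∈ [vP c] := hz
        simp only [List.mem_singleton] at hz
        subst hz
        intro i hzi
        cases hzi
      · exact absurd h adj_IO
    · obtain ⟨m', U1, W2, hl, hni⟩ := ih (fun i hi => by cases hi) hy
      refine ⟨m', Walk.cons h U1, W2, by
        show U1.length + 1 + 1 + W2.length = W'.length + 1; omega, ?_⟩
      intro z hz
      replace hz : z ∈ _ :: U1.support := hz
      rcases List.mem_cons.mp hz with rfl | hz'
      · exact hx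
      · exact hni z hz'
    · obtain ⟨m', U1, W2, hl, hni⟩ := ih (fun i hi => by cases hi) hy
      refine ⟨m', Walk.cons h U1, W2, by
        show U1.length + 1 + 1 + W2.length = W'.length + 1; omega, ?_⟩
      intro z hz
      replace hz : z ∈ _ :: U1.support := hz
      rcases List.mem_cons.mp hz with rfl | hz'
      · exact hx
      · exact hni z hz'

/-- potential function -/
def psiF (m' : Fin n) : pathVtx p n G → ℕ
  | Sum.inl _ => 0
  | Sum.inr (Sum.inl x) => if x = m' then 0 else 2 * p
  | Sum.inr (Sum.inr (q, t)) =>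
      min ((t.val + 1) + (if q.val.1 = m' then 0 else 2 * p))
        ((2 * p - 1 - t.val) + (if q.val.2 = m' then 0 else 2 * p))

lemma psi_step (hp : 1 ≤ p) (m' : Fin n) {x y : pathVtx p n G}
    (hadj : (Gprime p n G).Adj x y) (hx : ∀ i, x ≠ vO i) (hy : ∀ i, y ≠ vO i) :
    psiF m' x ≤ psiF m' y + 1 := by
  obtain (i | i | ⟨q, t⟩) := x
  · exact absurd rfl (hx i)
  · obtain (j | j | ⟨r, s⟩) := y
    · exact absurd rfl (hy j)
    · exact absurd hadj adj_PP
    · rcases adj_PI.mp hadj with ⟨rfl, ht⟩ | ⟨rfl, ht⟩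
      · show psiF m' (vP r.val.1) ≤ psiF m' (vI r s) + 1
        simp only [psiF, ht]
        by_cases h1 : r.val.1 = m' <;> by_cases h2 : r.val.2 = m' <;>
          simp only [h1, h2, if_true, if_false, ite_true, ite_false] <;> omega
      · show psiF m' (vP r.val.2) ≤ psiF m' (vI r s) + 1
        simp only [psiF, ht]
        have := s.isLt
        by_cases h1 : r.val.1 = m' <;> by_cases h2 : r.val.2 = m' <;>
          simp only [h1, h2, if_true, if_false, ite_true, ite_false] <;> omega
  · obtain (j | j | ⟨r, s⟩) := y
    · exact absurd rfl (hy j)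
    · rcases adj_IP.mp hadj with ⟨rfl, ht⟩ | ⟨rfl, ht⟩
      · show psiF m' (vI q t) ≤ psiF m' (vP q.val.1) + 1
        simp only [psiF, ht]
        by_cases h1 : q.val.1 = m' <;> by_cases h2 : q.val.2 = m' <;>
          simp only [h1, h2, if_true, if_false, ite_true, ite_false] <;> omega
      · show psiF m' (vI q t) ≤ psiF m' (vP q.val.2) + 1
        simp only [psiF, ht]
        have := t.isLt
        by_cases h1 : q.val.1 = m' <;> by_cases h2 : q.val.2 = m' <;>
          simp only [h1, h2, if_true, if_false, ite_true, ite_false] <;> omega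
    · obtain ⟨rfl, hts⟩ := adj_II.mp hadj
      show psiF m' (vI q t) ≤ psiF m' (vI q s) + 1
      simp only [psiF]
      have h1 := t.isLt
      have h2 := s.isLt
      by_cases hA : q.val.1 = m' <;> by_cases hB : q.val.2 = m' <;>
        simp only [hA, hB, if_true, if_false, ite_true, ite_false] <;> omega

lemma psi_walk (hp : 1 ≤ p) (m' : Fin n) :
    ∀ {x y : pathVtx p n G} (W : (Gprime p n G).Walk x y),
      (∀ z ∈ W.support, ∀ i, z ≠ vO i) → psiF m' x ≤ psiF m' y + W.length := by
  intro x y W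
  induction W with
  | nil =>
    intro _
    simp
  | @cons u v w h W' ih =>
    intro hni
    have hu : ∀ i, u ≠ vO i := hni u (by simp)
    have hv : ∀ i, v ≠ vO i := hni v (by rw [Walk.support_cons]; simp)
    have h1 := psi_step hp m' h hu hv
    have h2 := ih (fun z hz => hni z (by rw [Walk.support_cons]; exact List.mem_cons_of_mem _ hz))
    rw [Walk.length_cons]
    omega

/-- Main lower bound lemma -/
lemma LB (hp : 1 ≤ p) :
    ∀ (L : ℕ) {a b : Fin n} (W : (Gprime p n G).Walk (vO a) (vO b)), W.length = L →
      (∃ wG : G.Walk a b, wG.length ≤ W.length ∧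
        ((¬ ∀ z ∈ W.support, ∃ i, z = vO i) → wG.length + 2 ≤ W.length)) ∨
      2 * p + 2 ≤ W.length := by
  intro L
  induction L using Nat.strong_induction_on with
  | _ L ih =>
    intro a b W hWL
    rcases Dec1 W rfl rfl with hpure | ⟨m, w0, U, hl⟩
    · obtain ⟨wG, hlen, _, _⟩ := liftWalkAux W rfl rfl hpure
      exact Or.inl ⟨wG, le_of_eq hlen, fun hnp => absurd hpure hnp⟩
    · obtain ⟨m', U1, W2, hl2, hni⟩ := Dec2 U (fun i hi => by cases hi) rfl
      by_cases hmm : m = m'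
      · subst hmm
        set Wrec := ((w0.map homO).copy (homO_apply_eq _) (homO_apply_eq _)).append W2 with hWrec
        have hreclen : Wrec.length = w0.length + W2.length := by
          rw [hWrec, Walk.length_append, Walk.length_copy, Walk.length_map]
        have hlt : Wrec.length < L := by omega
        rcases ih Wrec.length hlt Wrec rfl with ⟨wG, hle, _⟩ | hbig
        · exact Or.inl ⟨wG, by omega, fun _ => by omega⟩
        · exact Or.inr (by omega)
      · have hpsi := psi_walk hp m' U1 hni
        have hstart : psiF m' (vP (p := p) (G := G) m) = 2 * p := by
          simp only [psiF, if_neg hmm]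
        have hend : psiF m' (vP (p := p) (G := G) m') = 0 := by
          simp [psiF]
        rw [hstart, hend] at hpsi
        exact Or.inr (by omega)
end LiftAndLB

section GadgetStructure
open SimpleGraph
variable {p n : ℕ} {G : SimpleGraph (Fin n)}

/-- left neighbour of an internal vertex -/
def leftN (q : farPairs p n G) (t : Fin (2 * p - 1)) : pathVtx p n G :=
  if t.val = 0 then vP q.val.1 else vI q ⟨t.val - 1, by have := t.isLt; omega⟩

/-- right neighbour of an internal vertex -/
def rightN (q : farPairs p n G) (t : Fin (2 * p - 1)) : pathVtx p n G :=
  if h : t.val = 2 * p - 2 then vP q.val.2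
  else vI q ⟨t.val + 1, by have := t.isLt; omega⟩

lemma adj_internal_iff {x : pathVtx p n G} {q : farPairs p n G} {t : Fin (2 * p - 1)} :
    (Gprime p n G).Adj x (vI q t) ↔ x = leftN q t ∨ x = rightN q t := by
  constructor
  · intro h
    obtain (i | i | ⟨r, s⟩) := x
    · exact absurd h adj_OI
    · rcases adj_PI.mp h with ⟨rfl, ht⟩ | ⟨rfl, ht⟩
      · left; rw [leftN, if_pos ht]
      · right; rw [rightN, dif_pos ht]
    · obtain ⟨rfl, hts | hts⟩ := adj_II.mp h
      · left
        rw [leftN, if_neg (show ¬(t.val = 0) by omega)]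
        exact congrArg (vI _) (Fin.ext (by show s.val = t.val - 1; omega))
      · right
        have hlt := s.isLt
        rw [rightN, dif_neg (show ¬(t.val = 2 * p - 2) by omega)]
        exact congrArg (vI _) (Fin.ext (by show s.val = t.val + 1; omega))
  · intro h
    rcases h with rfl | rfl
    · rw [leftN]
      split_ifs with h0
      · exact adj_PI.mpr (Or.inl ⟨rfl, h0⟩)
      · exact adj_II.mpr ⟨rfl, Or.inl (by simp; omega)⟩
    · rw [rightN]
      split_ifs with h0
      · exact adj_PI.mpr (Or.inr ⟨rfl, h0⟩)
      · exact adj_II.mpr ⟨rfl, Or.inr (by simp)⟩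

lemma leftN_ne_rightN (q : farPairs p n G) (t : Fin (2 * p - 1)) :
    leftN q t ≠ rightN q t := by
  rw [leftN, rightN]
  split_ifs with h1 h2 h2
  · intro h
    have := q.prop.1
    have : q.val.1 = q.val.2 := by
      have := (Sum.inr.injEq _ _).mp h
      exact (Sum.inl.injEq _ _).mp this
    omega
  · intro h
    cases (Sum.inr.injEq _ _).mp h
  · intro h
    cases (Sum.inr.injEq _ _).mp h
  · intro h
    have h1' := (Sum.inr.injEq _ _).mp h
    have h2' := (Sum.inr.injEq _ _).mp h1'
    have h3' := ((Prod.mk.injEq _ _ _ _).mp h2').2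
    have h4' : t.val - 1 = t.val + 1 := congrArg Fin.val h3'
    omega

/-- both incident gadget edges of a visited internal vertex lie on the cycle -/
lemma cycle_internal_edges {x0 : pathVtx p n G} {c : (Gprime p n G).Walk x0 x0}
    (hc : c.IsCycle) {q : farPairs p n G} {t : Fin (2 * p - 1)}
    (h : vI q t ∈ c.support) :
    s(vI q t, leftN q t) ∈ c.edges ∧ s(vI q t, rightN q t) ∈ c.edges := by
  obtain ⟨x, y, hxy, hax, hay, hex, hey⟩ := cycle_two_incident hc h
  have hx' := adj_internal_iff.mp hax.symm
  have hy' := adj_internal_iff.mp hay.symm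
  rcases hx' with rfl | rfl <;> rcases hy' with rfl | rfl
  · exact absurd rfl hxy
  · exact ⟨hex, hey⟩
  · exact ⟨hey, hex⟩
  · exact absurd rfl hxy

lemma chain_support {x0 : pathVtx p n G} {c : (Gprime p n G).Walk x0 x0}
    (hc : c.IsCycle) {q : farPairs p n G} {t0 : Fin (2 * p - 1)}
    (h0 : vI q t0 ∈ c.support) :
    ∀ t : Fin (2 * p - 1), vI q t ∈ c.support := by
  have hright : ∀ k (t : Fin (2 * p - 1)), t.val = t0.val + k → vI q t ∈ c.support := by
    intro k
    induction k with
    | zero =>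
      intro t ht
      have : t = t0 := Fin.ext (by omega)
      rw [this]; exact h0
    | succ k ih =>
      intro t ht
      have hlt := t.isLt
      have hk : t0.val + k < 2 * p - 1 := by omega
      have hprev := ih ⟨t0.val + k, hk⟩ rfl
      have hedge := (cycle_internal_edges hc hprev).2
      rw [rightN, dif_neg (show ¬(t0.val + k = 2 * p - 2) by omega)] at hedge
      have heq : (⟨t0.val + k + 1, by omega⟩ : Fin (2 * p - 1)) = t :=
        Fin.ext (by show t0.val + k + 1 = t.val; omega)
      rw [heq] at hedge
      exact c.snd_mem_support_of_mem_edges hedge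
  have hleft : ∀ k (t : Fin (2 * p - 1)), k ≤ t0.val → t.val + k = t0.val →
      vI q t ∈ c.support := by
    intro k
    induction k with
    | zero =>
      intro t _ ht
      have : t = t0 := Fin.ext (by omega)
      rw [this]; exact h0
    | succ k ih =>
      intro t hk ht
      have hlt := t0.isLt
      have hk' : t0.val - k < 2 * p - 1 := by omega
      have hprev := ih ⟨t0.val - k, hk'⟩ (by omega) (by show t0.val - k + k = t0.val; omega)
      have hedge := (cycle_internal_edges hc hprev).1
      rw [leftN, if_neg (show ¬(t0.val - k = 0) by omega)] at hedge
      have heq : (⟨t0.val - k - 1, by omega⟩ : Fin (2 * p - 1)) = t :=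
        Fin.ext (by show t0.val - k - 1 = t.val; omega)
      rw [heq] at hedge
      exact c.snd_mem_support_of_mem_edges hedge
  intro t
  rcases le_or_gt t0.val t.val with hle | hlt
  · exact hright (t.val - t0.val) t (by omega)
  · exact hleft (t0.val - t.val) t (by omega) (by omega)

end GadgetStructure

section GadgetEdges
open SimpleGraph
variable {p n : ℕ} {G : SimpleGraph (Fin n)}

/-- the `2p` edges of the gadget of a far pair -/
def gadgetEdges (hp : 1 ≤ p) (q : farPairs p n G) : List (Sym2 (pathVtx p n G)) :=
  ((List.finRange (2 * p - 1)).map fun t => s(vI q t, leftN q t)) ++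
    [s(vI q ⟨2 * p - 2, by omega⟩, vP q.val.2)]

lemma gadgetEdges_length (hp : 1 ≤ p) (q : farPairs p n G) :
    (gadgetEdges hp q).length = 2 * p := by
  simp only [gadgetEdges, List.length_append, List.length_map, List.length_finRange,
    List.length_singleton]
  omega

lemma gadgetEdges_sub (hp : 1 ≤ p) {x0 : pathVtx p n G} {c : (Gprime p n G).Walk x0 x0}
    (hc : c.IsCycle) {q : farPairs p n G} {t0 : Fin (2 * p - 1)}
    (hvis : vI q t0 ∈ c.support) : ∀ e ∈ gadgetEdges hp q, e ∈ c.edges := by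
  intro e he
  rw [gadgetEdges, List.mem_append] at he
  rcases he with he | he
  · obtain ⟨t, _, rfl⟩ := List.mem_map.mp he
    exact (cycle_internal_edges hc (chain_support hc hvis t)).1
  · rw [List.mem_singleton] at he
    subst he
    have hmem := chain_support hc hvis ⟨2 * p - 2, by omega⟩
    have := (cycle_internal_edges hc hmem).2
    rwa [rightN, dif_pos (show (2 : ℕ) * p - 2 = 2 * p - 2 from rfl)] at this

lemma gadgetEdges_endpoints (hp : 1 ≤ p) {q : farPairs p n G}
    {e : Sym2 (pathVtx p n G)} (he : e ∈ gadgetEdges hp q) :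
    ∀ z ∈ e, z = vP q.val.1 ∨ z = vP q.val.2 ∨ ∃ t, z = vI q t := by
  intro z hz
  rw [gadgetEdges, List.mem_append] at he
  rcases he with he | he
  · obtain ⟨t, _, rfl⟩ := List.mem_map.mp he
    rcases Sym2.mem_iff.mp hz with rfl | rfl
    · exact Or.inr (Or.inr ⟨t, rfl⟩)
    · rw [leftN]
      split_ifs
      · exact Or.inl rfl
      · exact Or.inr (Or.inr ⟨_, rfl⟩)
  · rw [List.mem_singleton] at he
    subst he
    rcases Sym2.mem_iff.mp hz with rfl | rfl
    · exact Or.inr (Or.inr ⟨_, rfl⟩)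
    · exact Or.inr (Or.inl rfl)

lemma gadgetEdges_hasInternal (hp : 1 ≤ p) {q : farPairs p n G}
    {e : Sym2 (pathVtx p n G)} (he : e ∈ gadgetEdges hp q) :
    ∃ t, vI q t ∈ e := by
  rw [gadgetEdges, List.mem_append] at he
  rcases he with he | he
  · obtain ⟨t, _, rfl⟩ := List.mem_map.mp he
    exact ⟨t, Sym2.mem_iff.mpr (Or.inl rfl)⟩
  · rw [List.mem_singleton] at he
    subst he
    exact ⟨_, Sym2.mem_iff.mpr (Or.inl rfl)⟩

lemma gadgetEdges_disjoint (hp : 1 ≤ p) {q r : farPairs p n G}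
    {e : Sym2 (pathVtx p n G)} (he : e ∈ gadgetEdges hp q)
    (he' : e ∈ gadgetEdges hp r) : q = r := by
  obtain ⟨t, ht⟩ := gadgetEdges_hasInternal hp he
  rcases gadgetEdges_endpoints hp he' _ ht with h | h | ⟨t', h⟩
  · exact absurd h (fun hh => by injection hh with h1; injection h1)
  · exact absurd h (fun hh => by injection hh with h1; injection h1)
  · have h1 := (Sum.inr.injEq _ _).mp h
    have h2 := (Sum.inr.injEq _ _).mp h1
    exact ((Prod.mk.injEq _ _ _ _).mp h2).1

lemma vP_ne_vI {m : Fin n} {q : farPairs p n G} {t : Fin (2 * p - 1)} :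
    vP (p := p) (G := G) m ≠ vI q t := fun hh => by injection hh with h1; injection h1

lemma vO_ne_vP {m m' : Fin n} : vO (p := p) (G := G) m ≠ vP m' := by intro hh; cases hh

lemma vO_ne_vI {m : Fin n} {q : farPairs p n G} {t : Fin (2 * p - 1)} :
    vO (p := p) (G := G) m ≠ vI q t := fun hh => by injection hh

lemma leftN_ne_vP2 (q : farPairs p n G) (t : Fin (2 * p - 1)) :
    leftN q t ≠ vP q.val.2 := by
  rw [leftN]
  split_ifs
  · intro h
    have h1 := (Sum.inr.injEq _ _).mp h
    have h2 := (Sum.inl.injEq _ _).mp h1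
    have := q.prop.1
    omega
  · exact fun hh => by injection hh with h1; injection h1

lemma gadgetEdges_nodup (hp : 1 ≤ p) (q : farPairs p n G) :
    (gadgetEdges hp q).Nodup := by
  rw [gadgetEdges]
  refine List.Nodup.append ?_ (List.nodup_singleton _) ?_
  · refine List.Nodup.map ?_ (List.nodup_finRange _)
    intro t t' h
    rcases Sym2.eq_iff.mp h with ⟨h1, _⟩ | ⟨h1, h2⟩
    · have := (Sum.inr.injEq _ _).mp h1
      have := (Sum.inr.injEq _ _).mp this
      exact ((Prod.mk.injEq _ _ _ _).mp this).2
    · -- vI q t = leftN q t' and leftN q t = vI q t'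
      exfalso
      rw [leftN] at h1 h2
      rcases em (t'.val = 0) with h0 | h0
      · rw [if_pos h0] at h1
        exact vP_ne_vI h1.symm
      · rw [if_neg h0] at h1
        have e1 := (Sum.inr.injEq _ _).mp h1
        have e1 := (Sum.inr.injEq _ _).mp e1
        have e1 : t.val = t'.val - 1 :=
          congrArg Fin.val ((Prod.mk.injEq _ _ _ _).mp e1).2
        rcases em (t.val = 0) with g0 | g0
        · rw [if_pos g0] at h2
          exact vP_ne_vI h2
        · rw [if_neg g0] at h2
          have e2 := (Sum.inr.injEq _ _).mp h2
          have e2 := (Sum.inr.injEq _ _).mp e2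
          have e2 : t.val - 1 = t'.val :=
            congrArg Fin.val ((Prod.mk.injEq _ _ _ _).mp e2).2
          omega
  · intro e he he'
    rw [List.mem_singleton] at he'
    obtain ⟨t, _, rfl⟩ := List.mem_map.mp he
    rcases Sym2.eq_iff.mp he' with ⟨h1, h2⟩ | ⟨h1, h2⟩
    · exact leftN_ne_vP2 q t h2
    · exact vP_ne_vI (q := q) h1.symm

/-- neighbours of a pendant vertex -/
lemma pendant_nbrs {x : pathVtx p n G} {m : Fin n} (h : (Gprime p n G).Adj x (vP m)) :
    x = vO m ∨ ∃ σ τ, x = vI σ τ := by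
  obtain (i | i | ⟨σ, τ⟩) := x
  · obtain rfl : i = m := adj_OP.mp h
    exact Or.inl rfl
  · exact absurd h adj_PP
  · exact Or.inr ⟨σ, τ, rfl⟩

/-- if all visited internal neighbours of a pendant coincide, its stem edge is
on the cycle -/
lemma stem_forced {x0 : pathVtx p n G} {c : (Gprime p n G).Walk x0 x0} (hc : c.IsCycle)
    {m : Fin n} (hm : vP m ∈ c.support)
    (huniq : ∀ (σ σ' : farPairs p n G) (τ τ' : Fin (2 * p - 1)),
      vI σ τ ∈ c.support → vI σ' τ' ∈ c.support →
      (Gprime p n G).Adj (vI σ τ) (vP m) → (Gprime p n G).Adj (vI σ' τ') (vP m) →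
      vI (p := p) (G := G) σ τ = vI σ' τ') :
    s(vP m, vO m) ∈ c.edges := by
  obtain ⟨x, y, hxy, hax, hay, hex, hey⟩ := cycle_two_incident hc hm
  rcases pendant_nbrs hax.symm with rfl | ⟨σ, τ, rfl⟩
  · exact hex
  rcases pendant_nbrs hay.symm with rfl | ⟨σ', τ', rfl⟩
  · exact hey
  exfalso
  have hxs : vI σ τ ∈ c.support := c.snd_mem_support_of_mem_edges hex
  have hys : vI σ' τ' ∈ c.support := c.snd_mem_support_of_mem_edges hey
  exact hxy (huniq σ σ' τ τ' hxs hys hax.symm hay.symm)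

end GadgetEdges

section Part2
open SimpleGraph
variable {p n : ℕ} {G : SimpleGraph (Fin n)}

lemma rotate_length {V : Type*} {Γ : SimpleGraph V} [DecidableEq V] {u v : V}
    (c : Γ.Walk v v) (h : u ∈ c.support) : (c.rotate u h).length = c.length := by
  rw [Walk.rotate, Walk.length_append]
  have := congrArg Walk.length (c.take_spec h)
  rw [Walk.length_append] at this
  omega

lemma count_le {V : Type*} {Γ : SimpleGraph V} {x0 : V} {c : Γ.Walk x0 x0}
    (hc : c.IsCycle) (R : List (Sym2 V)) (hnd : R.Nodup)
    (hsub : ∀ e ∈ R, e ∈ c.edges) : R.length ≤ c.length := by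
  have := (hnd.subperm hsub).length_le
  rwa [c.length_edges] at this

lemma pair_diff {q r : farPairs p n G} (hqr : q ≠ r) :
    ∃ m, (m = q.val.1 ∨ m = q.val.2) ∧ m ≠ r.val.1 ∧ m ≠ r.val.2 := by
  have hq := q.prop.1
  have hr := r.prop.1
  by_cases h11 : q.val.1 = r.val.1
  · refine ⟨q.val.2, Or.inr rfl, ?_, ?_⟩
    · intro h
      rw [← h11] at h
      rw [h] at hq
      exact lt_irrefl _ hq
    · intro h
      exact hqr (Subtype.ext (Prod.ext h11 h))
  · by_cases h12 : q.val.1 = r.val.2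
    · refine ⟨q.val.2, Or.inr rfl, ?_, ?_⟩
      · intro h
        rw [h12] at hq
        rw [h] at hq
        exact absurd (hr.trans hq) (lt_irrefl _)
      · intro h
        rw [h12] at hq
        rw [h] at hq
        exact lt_irrefl _ hq
    · exact ⟨q.val.1, Or.inl rfl, h11, h12⟩

lemma visited_nbr_unique {x0 : pathVtx p n G} {c : (Gprime p n G).Walk x0 x0}
    {q r : farPairs p n G} {m : Fin n}
    (honly : ∀ (σ : farPairs p n G) (τ : Fin (2 * p - 1)), vI σ τ ∈ c.support → σ = q ∨ σ = r)
    (hmq : m = q.val.1 ∨ m = q.val.2)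
    (hmr : (m ≠ r.val.1 ∧ m ≠ r.val.2) ∨ r = q) :
    ∀ (σ σ' : farPairs p n G) (τ τ' : Fin (2 * p - 1)),
      vI σ τ ∈ c.support → vI σ' τ' ∈ c.support →
      (Gprime p n G).Adj (vI σ τ) (vP m) → (Gprime p n G).Adj (vI σ' τ') (vP m) →
      vI (p := p) (G := G) σ τ = vI σ' τ' := by
  have hq12 : q.val.1 ≠ q.val.2 := ne_of_lt q.prop.1
  have key : ∀ (σ : farPairs p n G) (τ : Fin (2 * p - 1)), vI σ τ ∈ c.support →
      (Gprime p n G).Adj (vI σ τ) (vP m) →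
      σ = q ∧ ((m = q.val.1 ∧ τ.val = 0) ∨ (m = q.val.2 ∧ τ.val = 2 * p - 2)) := by
    intro σ τ hs ha
    have hcond := adj_IP.mp ha
    have hσq : σ = q := by
      rcases honly σ τ hs with h | h
      · exact h
      · rcases hmr with ⟨h1, h2⟩ | hrq
        · exfalso
          subst h
          rcases hcond with ⟨he, _⟩ | ⟨he, _⟩
          · exact h1 he
          · exact h2 he
        · rw [h, hrq]
    subst hσq
    rcases hcond with ⟨he, hτ⟩ | ⟨he, hτ⟩
    · rcases hmq with h | h
      · exact ⟨rfl, Or.inl ⟨h, hτ⟩⟩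
      · exact absurd (h.symm.trans he) (Ne.symm hq12)
    · rcases hmq with h | h
      · exact absurd (h.symm.trans he) hq12
      · exact ⟨rfl, Or.inr ⟨h, hτ⟩⟩
  intro σ σ' τ τ' hs hs' ha ha'
  obtain ⟨rfl, hτ⟩ := key σ τ hs ha
  obtain ⟨rfl, hτ'⟩ := key σ' τ' hs' ha'
  have : τ = τ' := by
    rcases hτ with ⟨h1, h2⟩ | ⟨h1, h2⟩ <;> rcases hτ' with ⟨h1', h2'⟩ | ⟨h1', h2'⟩
    · exact Fin.ext (by omega)
    · exact absurd (h1.symm.trans h1') hq12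
    · exact absurd (h1'.symm.trans h1) hq12
    · exact Fin.ext (by omega)
  rw [this]

lemma pendants_in_support (hp : 1 ≤ p) {x0 : pathVtx p n G}
    {c : (Gprime p n G).Walk x0 x0} (hc : c.IsCycle) {q : farPairs p n G}
    {t0 : Fin (2 * p - 1)} (hq : vI q t0 ∈ c.support) :
    s(vI q ⟨0, by omega⟩ , vP q.val.1) ∈ c.edges ∧
      s(vI q ⟨2 * p - 2, by omega⟩, vP q.val.2) ∈ c.edges := by
  constructor
  · have := (cycle_internal_edges hc (chain_support hc hq ⟨0, by omega⟩)).1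
    rwa [leftN, if_pos (show (0:ℕ) = 0 from rfl)] at this
  · have := (cycle_internal_edges hc (chain_support hc hq ⟨2 * p - 2, by omega⟩)).2
    rwa [rightN, dif_pos (show (2*p-2 : ℕ) = 2 * p - 2 from rfl)] at this

lemma stem_not_gadget (hp : 1 ≤ p) {m : Fin n} {σ : farPairs p n G} :
    s(vP (p := p) (G := G) m, vO m) ∉ gadgetEdges hp σ := by
  intro h
  have := gadgetEdges_endpoints hp h (vO m) (Sym2.mem_iff.mpr (Or.inr rfl))
  rcases this with h' | h' | ⟨t, h'⟩
  · exact vO_ne_vP h'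
  · exact vO_ne_vP h'
  · exact vO_ne_vI h'

lemma part2cycles (hp : 1 ≤ p)
    (hG2 : ∀ (a : Fin n) (cG : G.Walk a a), cG.IsCycle → 4 * p + 2 ≤ cG.length) :
    ∀ (x0 : pathVtx p n G) (c : (Gprime p n G).Walk x0 x0), c.IsCycle →
      4 * p + 2 ≤ c.length := by
  classical
  intro x0 c hc
  by_cases hvis : ∃ (σ : farPairs p n G) (τ : Fin (2 * p - 1)), vI σ τ ∈ c.support
  case neg =>
    have hpure : ∀ z ∈ c.support, ∃ i, z = vO i := by
      intro z hz
      obtain (i | i | ⟨σ, τ⟩) := z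
      · exact ⟨i, rfl⟩
      · exfalso
        obtain ⟨x, y, hxy, hax, hay, hex, hey⟩ := cycle_two_incident hc hz
        rcases pendant_nbrs hax.symm with rfl | ⟨σ, τ, rfl⟩
        · rcases pendant_nbrs hay.symm with rfl | ⟨σ, τ, rfl⟩
          · exact hxy rfl
          · exact hvis ⟨σ, τ, c.snd_mem_support_of_mem_edges hey⟩
        · exact hvis ⟨σ, τ, c.snd_mem_support_of_mem_edges hex⟩
      · exact absurd ⟨σ, τ, hz⟩ hvis
    obtain ⟨a, cG, hcG, hlen⟩ := liftCycle c hc hpure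
    rw [← hlen]
    exact hG2 a cG hcG
  case pos =>
  obtain ⟨q, t0, hq⟩ := hvis
  by_cases h2 : ∃ (σ : farPairs p n G) (τ : Fin (2 * p - 1)), vI σ τ ∈ c.support ∧ σ ≠ q
  · obtain ⟨r, s0, hr, hrq⟩ := h2
    by_cases h3 : ∃ (σ : farPairs p n G) (τ : Fin (2 * p - 1)),
        vI σ τ ∈ c.support ∧ σ ≠ q ∧ σ ≠ r
    · -- at least three gadgets
      obtain ⟨u, t3, hu, huq, hur⟩ := h3
      have hnd : (gadgetEdges hp q ++ gadgetEdges hp r ++ gadgetEdges hp u).Nodup := by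
        refine List.Nodup.append (List.Nodup.append (gadgetEdges_nodup hp q)
          (gadgetEdges_nodup hp r) ?_) (gadgetEdges_nodup hp u) ?_
        · intro e he he'
          exact hrq (gadgetEdges_disjoint hp he' he)
        · intro e he he'
          rw [List.mem_append] at he
          rcases he with he | he
          · exact huq (gadgetEdges_disjoint hp he' he)
          · exact hur (gadgetEdges_disjoint hp he' he)
      have hsub : ∀ e ∈ gadgetEdges hp q ++ gadgetEdges hp r ++ gadgetEdges hp u,
          e ∈ c.edges := by
        intro e he
        rw [List.mem_append, List.mem_append] at he
        rcases he with (he | he) | he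
        · exact gadgetEdges_sub hp hc hq e he
        · exact gadgetEdges_sub hp hc hr e he
        · exact gadgetEdges_sub hp hc hu e he
      have := count_le hc _ hnd hsub
      simp only [List.length_append, gadgetEdges_length] at this
      omega
    · -- exactly two gadgets
      push_neg at h3
      have honly : ∀ (σ : farPairs p n G) (τ : Fin (2 * p - 1)), vI σ τ ∈ c.support →
          σ = q ∨ σ = r := by
        intro σ τ hσ
        by_cases hone : σ = q
        · exact Or.inl hone
        · exact Or.inr (h3 σ τ hσ hone)
      obtain ⟨m, hmq, hmr1, hmr2⟩ := pair_diff (Ne.symm hrq)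
      obtain ⟨m', hm'r, hm'q1, hm'q2⟩ := pair_diff hrq
      have hpsq := pendants_in_support hp hc hq
      have hpsr := pendants_in_support hp hc hr
      have hmsup : vP m ∈ c.support := by
        rcases hmq with rfl | rfl
        · exact c.snd_mem_support_of_mem_edges hpsq.1
        · exact c.snd_mem_support_of_mem_edges hpsq.2
      have hm'sup : vP m' ∈ c.support := by
        rcases hm'r with rfl | rfl
        · exact c.snd_mem_support_of_mem_edges hpsr.1
        · exact c.snd_mem_support_of_mem_edges hpsr.2
      have hstem1 : s(vP m, vO m) ∈ c.edges :=
        stem_forced hc hmsup (visited_nbr_unique honly hmq (Or.inl ⟨hmr1, hmr2⟩))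
      have hstem2 : s(vP m', vO m') ∈ c.edges :=
        stem_forced hc hm'sup (visited_nbr_unique
          (fun σ τ h => (honly σ τ h).symm) hm'r (Or.inl ⟨hm'q1, hm'q2⟩))
      have hmm' : m ≠ m' := by
        intro h
        subst h
        rcases hm'r with h | h
        · exact hmr1 h
        · exact hmr2 h
      set R := gadgetEdges hp q ++ gadgetEdges hp r ++ [s(vP m, vO m), s(vP m', vO m')]
        with hR
      have hnd : R.Nodup := by
        rw [hR]
        refine List.Nodup.append (List.Nodup.append (gadgetEdges_nodup hp q)
          (gadgetEdges_nodup hp r) ?_) ?_ ?_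
        · intro e he he'
          exact hrq (gadgetEdges_disjoint hp he' he)
        · refine List.nodup_cons.mpr ⟨?_, List.nodup_singleton _⟩
          rw [List.mem_singleton]
          intro h
          rcases Sym2.eq_iff.mp h with ⟨h1, _⟩ | ⟨h1, _⟩
          · exact hmm' ((Sum.inl.injEq _ _).mp ((Sum.inr.injEq _ _).mp h1))
          · exact vO_ne_vP h1.symm
        · intro e he he'
          rw [List.mem_append] at he
          rcases List.mem_cons.mp he' with rfl | he2
          · rcases he with he | he <;> exact stem_not_gadget hp he
          · rw [List.mem_singleton] at he2
            subst he2
            rcases he with he | he <;> exact stem_not_gadget hp he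
      have hsub : ∀ e ∈ R, e ∈ c.edges := by
        intro e he
        rw [hR, List.mem_append, List.mem_append] at he
        rcases he with (he | he) | he
        · exact gadgetEdges_sub hp hc hq e he
        · exact gadgetEdges_sub hp hc hr e he
        · rcases List.mem_cons.mp he with rfl | he2
          · exact hstem1
          · rw [List.mem_singleton] at he2
            subst he2
            exact hstem2
      have := count_le hc _ hnd hsub
      rw [hR] at this
      simp only [List.length_append, gadgetEdges_length, List.length_cons,
        List.length_singleton] at this
      omega
  · -- exactly one gadget
    push_neg at h2
    have honly : ∀ (σ : farPairs p n G) (τ : Fin (2 * p - 1)), vI σ τ ∈ c.support →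
        σ = q ∨ σ = q := fun σ τ h => Or.inl (h2 σ τ h)
    have hps := pendants_in_support hp hc hq
    have hstem1 : s(vP q.val.1, vO q.val.1) ∈ c.edges :=
      stem_forced hc (c.snd_mem_support_of_mem_edges hps.1)
        (visited_nbr_unique honly (Or.inl rfl) (Or.inr rfl))
    have hstem2 : s(vP q.val.2, vO q.val.2) ∈ c.edges :=
      stem_forced hc (c.snd_mem_support_of_mem_edges hps.2)
        (visited_nbr_unique honly (Or.inr rfl) (Or.inr rfl))
    have hO1 : vO q.val.1 ∈ c.support := c.snd_mem_support_of_mem_edges hstem1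
    set c' := c.rotate _ hO1 with hc'def
    have hc' : c'.IsCycle := hc.rotate hO1
    have hedges : ∀ e, e ∈ c'.edges ↔ e ∈ c.edges := fun e => (c.rotate_edges _ hO1).mem_iff
    have hO2 : vO q.val.2 ∈ c'.support :=
      c'.snd_mem_support_of_mem_edges ((hedges _).mpr hstem2)
    have hclen : c'.length = c.length := rotate_length c hO1
    set W1 := c'.takeUntil (vO q.val.2) hO2 with hW1
    set W2 := c'.dropUntil (vO q.val.2) hO2 with hW2
    have hsplitlen : W1.length + W2.length = c.length := by
      have h := congrArg Walk.length (c'.take_spec hO2)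
      rw [Walk.length_append, ← hW1, ← hW2] at h
      omega
    have hfar := q.prop.2
    -- lower bound for W1
    have hb1 : 2 * p ≤ W1.length ∧
        ((¬ ∀ z ∈ W1.support, ∃ i, z = vO i) → 2 * p + 2 ≤ W1.length) := by
      rcases LB hp W1.length W1 rfl with ⟨wG, hle, himp⟩ | hbig
      · have h2p : 2 * p ≤ wG.length := by have := hfar wG; omega
        exact ⟨by omega, fun hnp => by have := himp hnp; omega⟩
      · exact ⟨by omega, fun _ => hbig⟩
    have hb2 : 2 * p ≤ W2.length ∧
        ((¬ ∀ z ∈ W2.support, ∃ i, z = vO i) → 2 * p + 2 ≤ W2.length) := by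
      rcases LB hp W2.length W2 rfl with ⟨wG, hle, himp⟩ | hbig
      · have h2p : 2 * p ≤ wG.length := by
          have := hfar wG.reverse
          rw [Walk.length_reverse] at this
          omega
        exact ⟨by omega, fun hnp => by have := himp hnp; omega⟩
      · exact ⟨by omega, fun _ => hbig⟩
    -- one of the two parts contains the internal vertex
    have hint : vI q t0 ∈ c'.support := by
      have he := (cycle_internal_edges hc hq).1
      exact c'.fst_mem_support_of_mem_edges ((hedges _).mpr he)
    have hsplit : vI q t0 ∈ W1.support ∨ vI q t0 ∈ W2.support := by
      have : vI q t0 ∈ (W1.append W2).support := by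
        rw [hW1, hW2, c'.take_spec hO2]
        exact hint
      exact (Walk.mem_support_append_iff _ _).mp this
    rcases hsplit with hs | hs
    · have himp : ¬ ∀ z ∈ W1.support, ∃ i, z = vO i := by
        intro hall
        obtain ⟨i, hi⟩ := hall _ hs
        exact vO_ne_vI hi.symm
      have := hb1.2 himp
      omega
    · have himp : ¬ ∀ z ∈ W2.support, ∃ i, z = vO i := by
        intro hall
        obtain ⟨i, hi⟩ := hall _ hs
        exact vO_ne_vI hi.symm
      have := hb2.2 himp
      omega

end Part2

/-- if `G` has girth at least `max (8p-3) (4p+2)`, then the graph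
`G'` (i) has every two vertices joined by a path of length at most `4p`,
(ii) has girth at least `4p+2`, and (iii) is 3-colourable iff `G` is. -/
theorem stmt_16 (p n : ℕ) (hp : 1 ≤ p) (G : SimpleGraph (Fin n))
    (hgirth : ((max (8 * p - 3) (4 * p + 2) : ℕ) : ℕ∞) ≤ G.girth) :
    (∀ x y : pathVtx p n G,
        ∃ w : (Gprime p n G).Walk x y, w.length ≤ 4 * p) ∧
    (((4 * p + 2 : ℕ) : ℕ∞) ≤ (Gprime p n G).girth) ∧
    ((Gprime p n G).Colorable 3 ↔ G.Colorable 3) := by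
  classical
  have hnac : ¬ G.IsAcyclic := by
    intro hac
    rw [hac.girth_eq_zero] at hgirth
    have : max (8 * p - 3) (4 * p + 2) ≤ 0 := by exact_mod_cast hgirth
    omega
  have hmaxle : max (8 * p - 3) (4 * p + 2) ≤ G.girth := by exact_mod_cast hgirth
  have hcyc : ∀ (a : Fin n) (cG : G.Walk a a), cG.IsCycle →
      max (8 * p - 3) (4 * p + 2) ≤ cG.length := by
    intro a cG hcG
    have hegirth : G.egirth ≤ (cG.length : ℕ∞) := by
      rw [SimpleGraph.egirth]
      exact (iInf_le _ a).trans ((iInf_le _ cG).trans (iInf_le _ hcG))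
    have hg : G.girth ≤ cG.length := by
      have := ENat.toNat_le_toNat hegirth (by simp)
      simpa [SimpleGraph.girth] using this
    omega
  have hgirthG : ∀ (a : Fin n) (cG : G.Walk a a), cG.IsCycle → 8 * p - 3 ≤ cG.length :=
    fun a cG hcG => le_trans (le_max_left _ _) (hcyc a cG hcG)
  have hG2 : ∀ (a : Fin n) (cG : G.Walk a a), cG.IsCycle → 4 * p + 2 ≤ cG.length :=
    fun a cG hcG => le_trans (le_max_right _ _) (hcyc a cG hcG)
  refine ⟨part1 hp hgirthG, ?_, part3 hp⟩
  have hnac' : ¬ (Gprime p n G).IsAcyclic := by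
    obtain ⟨a, cG, hcG, _⟩ := SimpleGraph.exists_girth_eq_length.mpr hnac
    intro hac
    exact hac (cG.map homO) (hcG.map homO_injective)
  obtain ⟨x, c, hc, hgeq⟩ := SimpleGraph.exists_girth_eq_length.mpr hnac'
  rw [hgeq]
  exact_mod_cast part2cycles hp hG2 x c hc
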